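/- arXiv:1607.02614 — 2 statements merged into one kernel-verified Lean document; each statement's English description precedes it below -/
import Mathlib

section
/- Let p be a prime with p ≡ 7 (mod 8). Then there are no positive integers x, y, z with x² + y² + z⁸ = p². -/
private lemma sq_mod_four (x : ℕ) : x ^ 2 % 4 = 0 ∨ x ^ 2 % 4 = 1 := by
  rcases Nat.even_or_odd x with ⟨k, rfl⟩ | ⟨k, rfl⟩
  · left; have : (k + k) ^ 2 = 4 * (k * k) := by ring
    omega
  · right; have : (2 * k + 1) ^ 2 = 4 * (k * k + k) + 1 := by ring
    omega

/-- A positive natural number `u ≡ 3 (mod 4)` has a prime factor `q ≡ 3 (mod 4)`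
with odd multiplicity. -/
private lemma exists_odd_padicValNat (u : ℕ) (hu4 : u % 4 = 3) :
    ∃ q : ℕ, q.Prime ∧ q % 4 = 3 ∧ Odd (padicValNat q u) := by
  by_contra hcon
  push_neg at hcon
  have hall : ∀ {q : ℕ}, q.Prime → q % 4 = 3 → Even (padicValNat q u) := by
    intro q hq hq4
    exact (Nat.not_odd_iff_even).mp (hcon q hq hq4)
  obtain ⟨x, y, hxy⟩ := (Nat.eq_sq_add_sq_iff (n := u)).mpr (fun q hq => hall (Nat.prime_of_mem_primeFactors hq))
  have h1 := sq_mod_four x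
  have h2 := sq_mod_four y
  have : u % 4 = (x ^ 2 % 4 + y ^ 2 % 4) % 4 := by
    rw [hxy, Nat.add_mod]
  omega

private lemma aux (p x y z u α : ℕ) (hp : p.Prime) (hz : 0 < z) (h4 : z ^ 4 < p)
    (hu : p - z ^ 4 = 2 ^ α * u) (hu4 : u % 4 = 3)
    (h : x ^ 2 + y ^ 2 + z ^ 8 = p ^ 2) : False := by
  obtain ⟨q, hq, hq4, hodd⟩ := exists_odd_padicValNat u hu4
  haveI : Fact q.Prime := ⟨hq⟩
  have hq2 : q ≠ 2 := by omega
  have hu0 : u ≠ 0 := by omega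
  have hb0 : p + z ^ 4 ≠ 0 := by have := hp.pos; omega
  have hqu : q ∣ u := by
    by_contra hnd
    rw [padicValNat.eq_zero_of_not_dvd hnd] at hodd
    simp at hodd
  have hqb : ¬ q ∣ (p + z ^ 4) := by
    intro hd
    have hqa : q ∣ (p - z ^ 4) := hu ▸ (hqu.mul_left _)
    have hsum : q ∣ 2 * p := by
      have h' := Nat.dvd_add hqa hd
      rwa [show p - z ^ 4 + (p + z ^ 4) = 2 * p by omega] at h'
    have hqp : q ∣ p := by
      rcases (Nat.Prime.dvd_mul hq).mp hsum with h2 | hp'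
      · exact absurd ((Nat.prime_dvd_prime_iff_eq hq Nat.prime_two).mp h2) hq2
      · exact hp'
    have hqep : q = p := (Nat.prime_dvd_prime_iff_eq hq hp).mp hqp
    subst hqep
    have hpz4 : q ∣ z ^ 4 := (Nat.dvd_add_right (dvd_refl q)).mp hd
    have hpz : q ∣ z := hq.dvd_of_dvd_pow hpz4
    have : q ≤ z := Nat.le_of_dvd hz hpz
    have : z ≤ z ^ 4 := Nat.le_self_pow (by norm_num) z
    omega
  have hN : x ^ 2 + y ^ 2 = (2 ^ α * u) * (p + z ^ 4) := by
    rw [← hu]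
    have hle : z ^ 4 ≤ p := le_of_lt h4
    have h8le : z ^ 8 ≤ p ^ 2 := by
      have := Nat.pow_le_pow_left hle 2
      have e1 : (z ^ 4) ^ 2 = z ^ 8 := by ring
      omega
    have key : (p - z ^ 4) * (p + z ^ 4) = p ^ 2 - z ^ 8 := by
      zify [hle, h8le]; ring
    omega
  have hEven : Even (padicValNat q (x ^ 2 + y ^ 2)) :=
    by
      by_cases h0 : x ^ 2 + y ^ 2 = 0
      · rw [h0]; simp
      by_cases hd : q ∣ x ^ 2 + y ^ 2
      · exact Nat.eq_sq_add_sq_iff.mp ⟨x, y, rfl⟩ q (Nat.mem_primeFactors.mpr ⟨hq, hd, h0⟩) hq4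
      · rw [padicValNat.eq_zero_of_not_dvd hd]; exact Even.zero
  rw [hN, padicValNat.mul (mul_ne_zero (pow_ne_zero _ two_ne_zero) hu0) hb0,
    padicValNat.mul (pow_ne_zero _ two_ne_zero) hu0,
    padicValNat.eq_zero_of_not_dvd hqb,
    padicValNat.eq_zero_of_not_dvd (fun hd => hq2 <|
      (Nat.prime_dvd_prime_iff_eq hq Nat.prime_two).mp (hq.dvd_of_dvd_pow hd))] at hEven
  simp at hEven
  exact (Nat.not_odd_iff_even.mpr hEven) hodd

theorem no_rep_k8 (p : ℕ) (hp : p.Prime) (hp7 : p % 8 = 7) :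
    ¬ ∃ x y z : ℕ, 0 < x ∧ 0 < y ∧ 0 < z ∧ x ^ 2 + y ^ 2 + z ^ 8 = p ^ 2 := by
  rintro ⟨x, y, z, hx, hy, hz, h⟩
  have hx2 : 1 ≤ x ^ 2 := Nat.one_le_pow _ _ hx
  have hy2 : 1 ≤ y ^ 2 := Nat.one_le_pow _ _ hy
  have hz8 : z ^ 8 < p ^ 2 := by omega
  have h4 : z ^ 4 < p := by
    have h8 : (z ^ 4) ^ 2 < p ^ 2 := by
      have : (z ^ 4) ^ 2 = z ^ 8 := by ring
      omega
    exact lt_of_pow_lt_pow_left₀ 2 (Nat.zero_le p) h8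
  rcases Nat.even_or_odd z with ⟨k, rfl⟩ | ⟨k, rfl⟩
  · -- z even : z^4 ≡ 0 (mod 8), so p - z^4 ≡ 3 (mod 4), odd part is itself
    have hm : (k + k) ^ 4 = 8 * (2 * k ^ 4) := by ring
    refine aux p x y (k + k) (p - (k + k) ^ 4) 0 hp hz h4 ?_ ?_ h
    · simp
    · omega
  · -- z odd : z^4 ≡ 1 (mod 8), so p - z^4 = 2 * u with u ≡ 3 (mod 4)
    have hm : (2 * k + 1) ^ 4 = 8 * (2 * k ^ 4 + 4 * k ^ 3 + 3 * k ^ 2 + k) + 1 := by ring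
    refine aux p x y (2 * k + 1) ((p - (2 * k + 1) ^ 4) / 2) 1 hp hz h4 ?_ ?_ h
    · omega
    · omega
end

section
/- Let k ≥ 3 be odd. There exist infinitely many positive integers N (namely N = p^k for primes p ≡ 1 (mod 4k)) such that the equation x² + y² + z^k = N has no integer solution with z ≡ 2k (mod 4k). -/
private lemma sq_add_sq_ne_three : ∀ x y : ZMod 4, x ^ 2 + y ^ 2 ≠ 3 := by decide

private lemma exists_odd_padic {B : ℕ} (hB : B % 4 = 3) :
    ∃ q : ℕ, q.Prime ∧ q % 4 = 3 ∧ Odd (padicValNat q B) := by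
  by_contra h
  push_neg at h
  obtain ⟨x, y, hxy⟩ := Nat.eq_sq_add_sq_iff.mpr
    (fun q hq hq3 => Nat.not_odd_iff_even.mp (h q (Nat.prime_of_mem_primeFactors hq) hq3))
  apply sq_add_sq_ne_three (x : ZMod 4) (y : ZMod 4)
  have h3 : ((B : ℕ) : ZMod 4) = 3 := by
    rw [← ZMod.natCast_mod, hB]; rfl
  rw [hxy] at h3
  push_cast at h3
  exact h3

/-- Core lemma: if `a ≡ 1 [mod 4k]`, `z ≡ 2k [mod 4k]`, `a > 0`, `gcd(a,z)=1`,
then `a^k - z^k` is not a sum of two squares. -/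
private lemma core (k : ℕ) (hk : Odd k) (hk3 : 3 ≤ k) (a z : ℤ)
    (ha0 : 0 < a) (ha : a ≡ 1 [ZMOD (4 * (k : ℤ))]) (hz : z ≡ 2 * k [ZMOD (4 * (k : ℤ))])
    (hco : IsCoprime a z) :
    ¬ ∃ x y : ℤ, x ^ 2 + y ^ 2 = a ^ k - z ^ k := by
  rintro ⟨x, y, hxy⟩
  set n : ℤ := a ^ k - z ^ k with hn
  have h4 : (4 : ℤ) ∣ 4 * (k : ℤ) := ⟨k, rfl⟩
  have ha4 : a ≡ 1 [ZMOD 4] := ha.of_dvd h4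
  have hz4 : z ≡ 2 [ZMOD 4] := by
    refine (hz.of_dvd h4).trans ?_
    obtain ⟨j, hj⟩ := hk
    have hkz : (k : ℤ) = 2 * j + 1 := by exact_mod_cast hj
    refine Int.ModEq.symm (Int.modEq_iff_dvd.mpr ⟨j, ?_⟩)
    rw [hkz]; ring
  have hzk4 : z ^ k ≡ 0 [ZMOD 4] := by
    refine (hz4.pow k).trans ?_
    have hd : (4 : ℤ) ∣ 2 ^ k := by
      have : (2 : ℤ) ^ 2 ∣ 2 ^ k := pow_dvd_pow 2 (by omega)
      simpa using this
    simpa [Int.modEq_zero_iff_dvd] using hd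
  have hn4 : n ≡ 1 [ZMOD 4] := by
    have := (ha4.pow k).sub hzk4
    simpa using this
  have hn_nonneg : 0 ≤ n := hxy ▸ by positivity
  have hn_pos : 0 < n := by
    rcases hn_nonneg.lt_or_eq with h | h
    · exact h
    · exfalso
      have := hn4.dvd
      rw [← h] at this
      norm_num at this
  have hza : z < a := by
    have hlt : z ^ k < a ^ k := by
      have := hn_pos; rw [hn] at this; linarith
    exact hk.strictMono_pow.lt_iff_lt.mp hlt
  set B : ℤ := a - z with hB
  have hBpos : 0 < B := by omega
  set A : ℤ := ∑ i ∈ Finset.range k, a ^ i * z ^ (k - 1 - i) with hA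
  have hAB : A * B = n := geom_sum₂_mul a z k
  have hApos : 0 < A := by nlinarith
  have hB4 : B ≡ 3 [ZMOD 4] := by
    have h1 : B ≡ 1 - 2 [ZMOD 4] := ha4.sub hz4
    exact h1.trans (by decide)
  have hBn4 : B.toNat % 4 = 3 := by
    have : B % 4 = 3 % 4 := hB4
    omega
  obtain ⟨q, hq, hq4, hqodd⟩ := exists_odd_padic hBn4
  haveI : Fact q.Prime := ⟨hq⟩
  haveI : NeZero q := ⟨hq.ne_zero⟩
  have hBnc : (B.toNat : ℤ) = B := Int.toNat_of_nonneg hBpos.le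
  have hAnc : (A.toNat : ℤ) = A := Int.toNat_of_nonneg hApos.le
  have hnnc : (n.toNat : ℤ) = n := Int.toNat_of_nonneg hn_nonneg
  have hqBn : q ∣ B.toNat := by
    by_contra hnd
    rw [padicValNat.eq_zero_of_not_dvd hnd] at hqodd
    simp at hqodd
  have hqB : (q : ℤ) ∣ B := by
    rw [← hBnc]; exact_mod_cast hqBn
  have hqk : ¬ q ∣ k := by
    intro hdvd
    have hdz : (q : ℤ) ∣ (k : ℤ) := by exact_mod_cast hdvd
    have h1 : (q : ℤ) ∣ 4 * (k : ℤ) := hdz.mul_left 4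
    have h2 : B ≡ 1 - 2 * k [ZMOD (q : ℤ)] := ((ha.sub hz).of_dvd h1)
    have h3 : (q : ℤ) ∣ 2 * (k : ℤ) := hdz.mul_left 2
    have h4' : (q : ℤ) ∣ (1 - 2 * k - B) := h2.dvd
    have h5 : (q : ℤ) ∣ 1 := by
      have := dvd_add (dvd_add h4' hqB) h3
      simpa using this
    have := Int.le_of_dvd one_pos h5
    have := hq.two_le
    omega
  have hqa : ¬ (q : ℤ) ∣ a := by
    intro hdvd
    have hqz : (q : ℤ) ∣ z := by
      have hd : (q : ℤ) ∣ (a - B) := dvd_sub hdvd hqB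
      simpa [hB] using hd
    have hu : IsUnit (q : ℤ) := hco.isUnit_of_dvd' hdvd hqz
    rw [Int.isUnit_iff] at hu
    have := hq.two_le
    omega
  have hqA : ¬ (q : ℤ) ∣ A := by
    intro hdvd
    have hA0 : ((A : ℤ) : ZMod q) = 0 := (ZMod.intCast_zmod_eq_zero_iff_dvd A q).mpr hdvd
    have hzq : ((z : ℤ) : ZMod q) = ((a : ℤ) : ZMod q) := by
      have h0 : ((a - z : ℤ) : ZMod q) = 0 := (ZMod.intCast_zmod_eq_zero_iff_dvd _ q).mpr hqB
      push_cast at h0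
      linear_combination -h0
    have hsum : ((A : ℤ) : ZMod q) = (k : ZMod q) * ((a : ℤ) : ZMod q) ^ (k - 1) := by
      rw [hA]
      push_cast
      have hterm : ∀ i ∈ Finset.range k,
          ((a : ℤ) : ZMod q) ^ i * ((z : ℤ) : ZMod q) ^ (k - 1 - i)
            = ((a : ℤ) : ZMod q) ^ (k - 1) := by
        intro i hi
        have hie : i + (k - 1 - i) = k - 1 := by
          have := Finset.mem_range.mp hi; omega
        rw [hzq, ← pow_add, hie]
      rw [Finset.sum_congr rfl hterm, Finset.sum_const, Finset.card_range, nsmul_eq_mul]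
    have hkne : (k : ZMod q) ≠ 0 := fun h0 =>
      hqk ((ZMod.natCast_eq_zero_iff k q).mp h0)
    have hane : ((a : ℤ) : ZMod q) ≠ 0 := fun h0 =>
      hqa ((ZMod.intCast_zmod_eq_zero_iff_dvd a q).mp h0)
    rw [hsum] at hA0
    exact (mul_ne_zero hkne (pow_ne_zero _ hane)) hA0
  have hqAn : ¬ q ∣ A.toNat := by
    intro h
    apply hqA
    rw [← hAnc]; exact_mod_cast h
  have hnn : n.toNat = A.toNat * B.toNat := by
    have hc : ((A.toNat * B.toNat : ℕ) : ℤ) = (n.toNat : ℤ) := by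
      push_cast
      rw [hAnc, hBnc, hnnc, hAB]
    exact_mod_cast hc.symm
  have hAne : A.toNat ≠ 0 := by omega
  have hBne : B.toNat ≠ 0 := by omega
  have hveq : padicValNat q n.toNat = padicValNat q B.toNat := by
    rw [hnn, padicValNat.mul hAne hBne, padicValNat.eq_zero_of_not_dvd hqAn, zero_add]
  have hsos : ∃ u v : ℕ, n.toNat = u ^ 2 + v ^ 2 := by
    refine ⟨x.natAbs, y.natAbs, ?_⟩
    have hc : ((x.natAbs ^ 2 + y.natAbs ^ 2 : ℕ) : ℤ) = (n.toNat : ℤ) := by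
      push_cast
      rw [sq_abs, sq_abs, hxy, hnnc]
    exact_mod_cast hc.symm
  have heven := Nat.eq_sq_add_sq_iff.mp hsos q (Nat.mem_primeFactors.mpr ⟨hq, by rw [hnn]; exact dvd_mul_of_dvd_right hqBn _, by omega⟩) hq4
  rw [hveq] at heven
  exact (Nat.not_odd_iff_even.mpr heven) hqodd

private lemma norep (k : ℕ) (hk : Odd k) (hk3 : 3 ≤ k) (p : ℕ) (hp : p.Prime)
    (hp1 : (p : ℤ) ≡ 1 [ZMOD (4 * k)]) :
    ¬ ∃ x y z : ℤ, z ≡ 2 * k [ZMOD (4 * k)] ∧ x ^ 2 + y ^ 2 + z ^ k = (p : ℤ) ^ k := by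
  rintro ⟨x, y, z, hz, heq⟩
  have hxy : x ^ 2 + y ^ 2 = (p : ℤ) ^ k - z ^ k := by linarith
  by_cases hdvd : (p : ℤ) ∣ z
  · obtain ⟨w, rfl⟩ := hdvd
    have hw : w ≡ 2 * k [ZMOD (4 * (k : ℤ))] := by
      have h1 : (p : ℤ) * w ≡ 1 * w [ZMOD (4 * (k : ℤ))] := hp1.mul_right w
      rw [one_mul] at h1
      exact h1.symm.trans hz
    set m : ℤ := 1 - w ^ k with hm
    have hfac : (p : ℤ) ^ k - ((p : ℤ) * w) ^ k = (p : ℤ) ^ k * m := by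
      rw [hm]; ring
    have hppos : (0 : ℤ) < (p : ℤ) ^ k := pow_pos (by exact_mod_cast hp.pos) k
    have hmnn : 0 ≤ m := by
      by_contra hneg
      push_neg at hneg
      have : (p : ℤ) ^ k * m < 0 := mul_neg_of_pos_of_neg hppos hneg
      nlinarith [sq_nonneg x, sq_nonneg y]
    -- m is odd, hence nonzero
    have hw2 : w ≡ 2 [ZMOD 4] := by
      have h4 : (4 : ℤ) ∣ 4 * (k : ℤ) := ⟨k, rfl⟩
      refine (hw.of_dvd h4).trans ?_
      obtain ⟨j, hj⟩ := hk
      have hkz : (k : ℤ) = 2 * j + 1 := by exact_mod_cast hj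
      refine Int.ModEq.symm (Int.modEq_iff_dvd.mpr ⟨j, ?_⟩)
      rw [hkz]; ring
    have hweven : (2 : ℤ) ∣ w := by
      have h2 : w ≡ 2 [ZMOD 2] := hw2.of_dvd ⟨2, by norm_num⟩
      have := h2.dvd
      omega
    have hmodd : ¬ (2 : ℤ) ∣ m := by
      intro h2m
      have : (2 : ℤ) ∣ w ^ k := hweven.trans (dvd_pow_self w (by omega))
      omega
    have hmpos : 0 < m := by
      rcases hmnn.lt_or_eq with h | h
      · exact h
      · exact absurd (h ▸ dvd_zero 2) hmodd
    -- transfer sum-of-two-squares from p^k * m to m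
    have hq1 : p % 4 = 1 := by
      have h4 : (4 : ℤ) ∣ 4 * (k : ℤ) := ⟨k, rfl⟩
      have := (hp1.of_dvd h4)
      have h := this  -- (p:ℤ) ≡ 1 [ZMOD 4]
      have hmod : (p : ℤ) % 4 = 1 % 4 := h
      omega
    have hmc : (m.toNat : ℤ) = m := Int.toNat_of_nonneg hmnn
    have hmsos : ∃ u v : ℕ, m.toNat = u ^ 2 + v ^ 2 := by
      rw [Nat.eq_sq_add_sq_iff]
      intro q hqm hq3
      have hqp : q.Prime := Nat.prime_of_mem_primeFactors hqm
      haveI : Fact q.Prime := ⟨hqp⟩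
      have hqne : q ≠ p := fun h => by rw [h, hq1] at hq3; omega
      have hN : (p ^ k * m.toNat : ℕ) = x.natAbs ^ 2 + y.natAbs ^ 2 := by
        have hc : ((p ^ k * m.toNat : ℕ) : ℤ) = ((x.natAbs ^ 2 + y.natAbs ^ 2 : ℕ) : ℤ) := by
          push_cast
          rw [hmc, sq_abs, sq_abs, hxy, hfac]
        exact_mod_cast hc
      have hsos2 : ∃ u v : ℕ, (p ^ k * m.toNat : ℕ) = u ^ 2 + v ^ 2 :=
        ⟨x.natAbs, y.natAbs, hN⟩
      have heven := Nat.eq_sq_add_sq_iff.mp hsos2 q (Nat.mem_primeFactors.mpr ⟨hqp, dvd_mul_of_dvd_right (Nat.mem_primeFactors.mp hqm).2.1 _, Nat.mul_ne_zero (pow_pos hp.pos k).ne' (Nat.mem_primeFactors.mp hqm).2.2⟩) hq3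
      have hmne : m.toNat ≠ 0 := by omega
      have hpkne : p ^ k ≠ 0 := (pow_pos hp.pos k).ne'
      have hqpk : ¬ q ∣ p ^ k := by
        intro h
        exact hqne (((Nat.prime_dvd_prime_iff_eq hqp hp).mp (hqp.dvd_of_dvd_pow h)))
      rwa [padicValNat.mul hpkne hmne, padicValNat.eq_zero_of_not_dvd hqpk, zero_add] at heven
    obtain ⟨u, v, huv⟩ := hmsos
    refine core k hk hk3 1 w one_pos (Int.ModEq.refl 1) hw isCoprime_one_left ⟨u, v, ?_⟩
    have : ((u ^ 2 + v ^ 2 : ℕ) : ℤ) = m := by rw [← huv, hmc]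
    push_cast at this
    rw [one_pow]
    linarith [this]
  · have hpz : Prime (p : ℤ) := Nat.prime_iff_prime_int.mp hp
    have hco : IsCoprime (p : ℤ) z := (hpz.coprime_iff_not_dvd).mpr hdvd
    have hp0 : (0 : ℤ) < p := by exact_mod_cast hp.pos
    exact core k hk hk3 p z hp0 hp1 hz hco ⟨x, y, hxy⟩

theorem infinitely_many_not_rep_odd_k (k : ℕ) (hk : Odd k) (hk3 : 3 ≤ k) :
    {N : ℕ | 0 < N ∧ ¬ ∃ x y z : ℤ, z ≡ 2 * k [ZMOD (4 * k)] ∧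
        x ^ 2 + y ^ 2 + z ^ k = (N : ℤ)}.Infinite ∧
    ∀ p : ℕ, p.Prime → (p : ℤ) ≡ 1 [ZMOD (4 * k)] →
      ¬ ∃ x y z : ℤ, z ≡ 2 * k [ZMOD (4 * k)] ∧ x ^ 2 + y ^ 2 + z ^ k = (p : ℤ) ^ k := by
  refine ⟨?_, fun p hp hp1 => norep k hk hk3 p hp hp1⟩
  haveI : NeZero (4 * k) := ⟨by omega⟩
  have hinf : {p : ℕ | p.Prime ∧ (p : ZMod (4 * k)) = 1}.Infinite :=
    Nat.infinite_setOfPred_prime_and_eq_mod isUnit_one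
  have hinj : Set.InjOn (fun p : ℕ => p ^ k) {p : ℕ | p.Prime ∧ (p : ZMod (4 * k)) = 1} :=
    (Nat.pow_left_injective (by omega)).injOn
  refine Set.Infinite.mono ?_ (hinf.image hinj)
  rintro N ⟨p, ⟨hpp, hpm⟩, rfl⟩
  have hp1 : (p : ℤ) ≡ 1 [ZMOD (4 * k)] := by
    have h1 : ((p : ℤ) : ZMod (4 * k)) = ((1 : ℤ) : ZMod (4 * k)) := by
      push_cast
      rw [hpm]
    have h2 := (ZMod.intCast_eq_intCast_iff _ _ _).mp h1
    have : ((4 * k : ℕ) : ℤ) = 4 * (k : ℤ) := by push_cast; ring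
    rwa [this] at h2
  refine ⟨pow_pos hpp.pos k, ?_⟩
  rintro ⟨x, y, z, hz, heq⟩
  refine norep k hk hk3 p hpp hp1 ⟨x, y, z, hz, ?_⟩
  rw [heq]
  push_cast
  ring
end
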